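/- arXiv:1602.07262 — 5 statements merged into one kernel-verified Lean document; each statement's English description precedes it below -/
import Mathlib

section
/- Let $\beta \in (0,1)$ and let $k \geq 1$ be an integer. Then $\frac{\Gamma(k)}{\Gamma(1+\beta(k-1))} \leq \frac{2\,\Gamma(1+k)}{\Gamma(1+\beta k)}$. -/
theorem gamma_ratio_bound' (β : ℝ) (hβ : β ∈ Set.Ioo (0:ℝ) 1) (k : ℕ) (hk : 1 ≤ k) :
    Real.Gamma (k : ℝ) / Real.Gamma (1 + β * ((k : ℝ) - 1)) ≤
      2 * Real.Gamma (1 + (k : ℝ)) / Real.Gamma (1 + β * k) := by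
  obtain ⟨hβ0, hβ1⟩ := hβ
  have hk1 : (1:ℝ) ≤ (k:ℝ) := by exact_mod_cast hk
  set s : ℝ := 1 + β * ((k:ℝ) - 1) with hs_def
  have hs1 : 1 ≤ s := by
    have : 0 ≤ β * ((k:ℝ) - 1) := mul_nonneg hβ0.le (by linarith)
    linarith
  have hs0 : 0 < s := by linarith
  have hΓs : 0 < Real.Gamma s := Real.Gamma_pos_of_pos hs0
  have hΓk : 0 < Real.Gamma (k:ℝ) := Real.Gamma_pos_of_pos (by linarith)
  have hΓb : 0 < Real.Gamma (1 + β * k) :=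
    Real.Gamma_pos_of_pos (by nlinarith)
  have hsk : s ≤ (k:ℝ) := by nlinarith
  -- key estimate : Γ(1+βk) ≤ k * Γ s
  have key : Real.Gamma (1 + β * k) ≤ (k:ℝ) * Real.Gamma s := by
    have hconv := Real.Gamma_mul_add_mul_le_rpow_Gamma_mul_rpow_Gamma
      (s := s) (t := s + 1) hs0 (by linarith) (a := 1 - β) (b := β)
      (by linarith) hβ0 (by ring)
    have harg : (1 - β) * s + β * (s + 1) = 1 + β * k := by
      rw [hs_def]; ring
    rw [harg] at hconv
    have hΓs1 : Real.Gamma (s + 1) = s * Real.Gamma s := Real.Gamma_add_one (by positivity)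
    calc Real.Gamma (1 + β * k)
        ≤ Real.Gamma s ^ (1 - β) * Real.Gamma (s + 1) ^ β := hconv
      _ = s ^ β * Real.Gamma s := by
          rw [hΓs1, Real.mul_rpow hs0.le hΓs.le,
            ← mul_assoc, mul_comm (Real.Gamma s ^ (1-β)) (s ^ β), mul_assoc,
            ← Real.rpow_add hΓs]
          norm_num
      _ ≤ s * Real.Gamma s := by
          have : s ^ β ≤ s ^ (1:ℝ) :=
            Real.rpow_le_rpow_of_exponent_le hs1 hβ1.le
          rw [Real.rpow_one] at this
          exact mul_le_mul_of_nonneg_right this hΓs.le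
      _ ≤ (k:ℝ) * Real.Gamma s := mul_le_mul_of_nonneg_right hsk hΓs.le
  have hΓ1k : Real.Gamma (1 + (k:ℝ)) = (k:ℝ) * Real.Gamma (k:ℝ) := by
    rw [add_comm]; exact Real.Gamma_add_one (by positivity)
  rw [hΓ1k, div_le_div_iff₀ hΓs hΓb]
  nlinarith [mul_le_mul_of_nonneg_left key hΓk.le]
end

section
/- For every $\beta \in (0,1)$, $d \in \{1,2,3\}$ and every integer $k \geq 1$, $\frac{\Gamma(\beta(k - d/4) + 1/2)}{\Gamma(1+\beta k)} \leq \frac{\Gamma(\beta(1 - d/4) + 1/2)}{\Gamma(1+\beta)}$. -/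
open MeasureTheory

lemma real_beta (a b : ℝ) (ha : 0 < a) (hb : 0 < b) :
    Real.Gamma a * Real.Gamma b =
      Real.Gamma (a + b) * ∫ x in (0:ℝ)..1, x ^ (a-1) * (1-x) ^ (b-1) := by
  have h := Complex.Gamma_mul_Gamma_eq_betaIntegral (s := (a:ℂ)) (t := (b:ℂ))
    (by simpa) (by simpa)
  have hbeta : Complex.betaIntegral a b =
      ((∫ x in (0:ℝ)..1, x ^ (a-1) * (1-x) ^ (b-1) : ℝ) : ℂ) := by
    rw [Complex.betaIntegral, ← intervalIntegral.integral_ofReal]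
    refine intervalIntegral.integral_congr fun x hx => ?_
    rw [Set.uIcc_of_le (by norm_num : (0:ℝ) ≤ 1)] at hx
    obtain ⟨hx0, hx1⟩ := hx
    rw [Complex.ofReal_mul, Complex.ofReal_cpow hx0,
      Complex.ofReal_cpow (by linarith : (0:ℝ) ≤ 1 - x)]
    push_cast
    ring
  rw [hbeta, ← Complex.ofReal_add, Complex.Gamma_ofReal, Complex.Gamma_ofReal,
    Complex.Gamma_ofReal, ← Complex.ofReal_mul, ← Complex.ofReal_mul] at h
  exact_mod_cast h

lemma real_beta_integrable (a b : ℝ) (ha : 0 < a) (hb : 0 < b) :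
    IntegrableOn (fun x : ℝ => x ^ (a-1) * (1-x) ^ (b-1)) (Set.Ioc 0 1) volume := by
  have hc := Complex.betaIntegral_convergent (u := (a:ℂ)) (v := (b:ℂ)) (by simpa) (by simpa)
  rw [intervalIntegrable_iff_integrableOn_Ioc_of_le (by norm_num)] at hc
  refine (hc.re).congr ((MeasureTheory.ae_restrict_iff' measurableSet_Ioc).mpr
    (Filter.Eventually.of_forall fun x hx => ?_))
  obtain ⟨hx0, hx1⟩ := hx
  simp only [RCLike.re_to_complex]
  rw [show ((a:ℂ)-1) = ((a-1:ℝ):ℂ) by push_cast; ring,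
    show ((b:ℂ)-1) = ((b-1:ℝ):ℂ) by push_cast; ring,
    show ((1:ℂ) - (x:ℂ)) = ((1-x:ℝ):ℂ) by push_cast; ring,
    ← Complex.ofReal_cpow hx0.le, ← Complex.ofReal_cpow (by linarith : (0:ℝ) ≤ 1 - x),
    ← Complex.ofReal_mul, Complex.ofReal_re]

theorem gamma_ratio_mono_half (β : ℝ) (hβ : β ∈ Set.Ioo (0:ℝ) 1) (d : ℕ)
    (hd : d ∈ ({1, 2, 3} : Set ℕ)) (k : ℕ) (hk : 1 ≤ k) :
    Real.Gamma (β * ((k : ℝ) - d / 4) + 1 / 2) / Real.Gamma (1 + β * k) ≤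
      Real.Gamma (β * (1 - (d : ℝ) / 4) + 1 / 2) / Real.Gamma (1 + β) := by
  obtain ⟨hβ0, hβ1⟩ := hβ
  have hd3 : (d:ℝ) ≤ 3 := by
    rcases hd with h | h | h <;> subst h <;> norm_num
  have hd0 : (0:ℝ) ≤ d := Nat.cast_nonneg d
  set B : ℝ := 1/2 + β * ((d:ℝ)/4) with hBdef
  have hB : 0 < B := by
    have : 0 ≤ β * ((d:ℝ)/4) := by positivity
    simp only [hBdef]; linarith
  have key : ∀ n : ℕ, 1 ≤ n →
      Real.Gamma (β * ((n : ℝ) - d / 4) + 1 / 2) / Real.Gamma (1 + β * n) =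
        (∫ x in (0:ℝ)..1, x ^ (β * ((n:ℝ) - d/4) + 1/2 - 1) * (1-x) ^ (B-1)) /
          Real.Gamma B := by
    intro n hn
    have hn1 : (1:ℝ) ≤ n := by exact_mod_cast hn
    have hA : 0 < β * ((n:ℝ) - d/4) + 1/2 := by nlinarith
    have h1n : (0:ℝ) < 1 + β * n := by nlinarith
    have h := real_beta _ _ hA hB
    have hsum : (β * ((n:ℝ) - d/4) + 1/2) + B = 1 + β * n := by
      simp only [hBdef]; ring
    rw [hsum] at h
    rw [div_eq_div_iff (Real.Gamma_pos_of_pos h1n).ne' (Real.Gamma_pos_of_pos hB).ne', h]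
    ring
  have h1 := key 1 le_rfl
  have hkk := key k hk
  push_cast at h1
  rw [mul_one] at h1
  rw [hkk, h1]
  have hk1 : (1:ℝ) ≤ k := by exact_mod_cast hk
  have hAk : 0 < β * ((k:ℝ) - d/4) + 1/2 := by nlinarith
  have hA1 : 0 < β * (1 - (d:ℝ)/4) + 1/2 := by nlinarith
  have mono : (∫ x in (0:ℝ)..1, x ^ (β * ((k:ℝ) - d/4) + 1/2 - 1) * (1-x) ^ (B-1)) ≤
      ∫ x in (0:ℝ)..1, x ^ (β * (1 - (d:ℝ)/4) + 1/2 - 1) * (1-x) ^ (B-1) := by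
    rw [intervalIntegral.integral_of_le (by norm_num : (0:ℝ) ≤ 1),
      intervalIntegral.integral_of_le (by norm_num : (0:ℝ) ≤ 1)]
    refine setIntegral_mono_on (real_beta_integrable _ _ hAk hB)
      (real_beta_integrable _ _ hA1 hB) measurableSet_Ioc fun x hx => ?_
    obtain ⟨hx0, hx1⟩ := hx
    have hexp : β * (1 - (d:ℝ)/4) + 1/2 - 1 ≤ β * ((k:ℝ) - d/4) + 1/2 - 1 := by
      nlinarith
    exact mul_le_mul_of_nonneg_right
      (Real.rpow_le_rpow_of_exponent_ge hx0 hx1 hexp)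
      (Real.rpow_nonneg (by linarith) _)
  gcongr
end

section
/- For every $\beta \in (0,1)$, $d \in \{1,2,3\}$ and every integer $k \geq 1$, $\frac{\Gamma(\beta(k - d/4))}{\Gamma(1+\beta k)} \leq \frac{\Gamma(\beta(1 - d/4))}{\Gamma(1+\beta)}$. -/
open MeasureTheory intervalIntegral Set

lemma betaIntegrand_integrable {x y : ℝ} (hx : 0 < x) (hy : 0 < y) :
    IntervalIntegrable (fun t : ℝ => t ^ (x - 1) * (1 - t) ^ (y - 1)) volume 0 1 := by
  have h := Complex.betaIntegral_convergent (u := (x : ℂ)) (v := (y : ℂ))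
    (by simpa using hx) (by simpa using hy)
  rw [intervalIntegrable_iff, uIoc_of_le (by norm_num : (0:ℝ) ≤ 1)] at h ⊢
  refine MeasureTheory.IntegrableOn.congr_fun h.re ?_ measurableSet_Ioc
  intro t ht
  dsimp only
  rw [show ((x:ℂ) - 1) = ((x - 1 : ℝ) : ℂ) by push_cast; ring,
    show ((y:ℂ) - 1) = ((y - 1 : ℝ) : ℂ) by push_cast; ring,
    show (1 - (t:ℂ)) = ((1 - t : ℝ) : ℂ) by push_cast; ring]
  rw [← Complex.ofReal_cpow ht.1.le, ← Complex.ofReal_cpow (by linarith [ht.2] : (0:ℝ) ≤ 1 - t),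
    ← Complex.ofReal_mul]
  simp

lemma realBeta_gamma {x y : ℝ} (hx : 0 < x) (hy : 0 < y) :
    Real.Gamma x * Real.Gamma y =
      Real.Gamma (x + y) * ∫ t in (0:ℝ)..1, t ^ (x - 1) * (1 - t) ^ (y - 1) := by
  have h := Complex.Gamma_mul_Gamma_eq_betaIntegral (s := (x : ℂ)) (t := (y : ℂ))
    (by simpa using hx) (by simpa using hy)
  have hbeta : Complex.betaIntegral x y =
      ((∫ t in (0:ℝ)..1, t ^ (x - 1) * (1 - t) ^ (y - 1) : ℝ) : ℂ) := by
    rw [Complex.betaIntegral, ← intervalIntegral.integral_ofReal]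
    apply intervalIntegral.integral_congr
    intro t ht
    rw [uIcc_of_le (by norm_num : (0:ℝ) ≤ 1)] at ht
    dsimp only
    rw [show ((x:ℂ) - 1) = ((x - 1 : ℝ) : ℂ) by push_cast; ring,
      show ((y:ℂ) - 1) = ((y - 1 : ℝ) : ℂ) by push_cast; ring,
      show (1 - (t:ℂ)) = ((1 - t : ℝ) : ℂ) by push_cast; ring]
    rw [← Complex.ofReal_cpow ht.1, ← Complex.ofReal_cpow (by linarith [ht.2] : (0:ℝ) ≤ 1 - t),
      ← Complex.ofReal_mul]
  rw [hbeta, ← Complex.ofReal_add, Complex.Gamma_ofReal, Complex.Gamma_ofReal,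
    Complex.Gamma_ofReal] at h
  exact_mod_cast h

theorem gamma_ratio_mono (β : ℝ) (hβ : β ∈ Set.Ioo (0:ℝ) 1) (d : ℕ)
    (hd : d ∈ ({1, 2, 3} : Set ℕ)) (k : ℕ) (hk : 1 ≤ k) :
    Real.Gamma (β * ((k : ℝ) - d / 4)) / Real.Gamma (1 + β * k) ≤
      Real.Gamma (β * (1 - (d : ℝ) / 4)) / Real.Gamma (1 + β) := by
  obtain ⟨hβ0, hβ1⟩ := hβ
  have hd4 : (d : ℝ) / 4 < 1 := by
    rcases hd with h | h | h <;> subst h <;> norm_num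
  have hd0 : 0 ≤ (d : ℝ) / 4 := by positivity
  have hk1 : (1:ℝ) ≤ (k:ℝ) := by exact_mod_cast hk
  set x₁ : ℝ := β * (1 - (d:ℝ) / 4) with hx₁
  set x₂ : ℝ := β * ((k:ℝ) - (d:ℝ) / 4) with hx₂
  set y : ℝ := 1 + β * ((d:ℝ) / 4) with hy
  have hx₁0 : 0 < x₁ := by apply mul_pos hβ0; linarith
  have hx₂0 : 0 < x₂ := by apply mul_pos hβ0; linarith
  have hy0 : 0 < y := by positivity
  have hx12 : x₁ ≤ x₂ := by
    apply mul_le_mul_of_nonneg_left _ hβ0.le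
    linarith
  have hsum₁ : x₁ + y = 1 + β := by rw [hx₁, hy]; ring
  have hsum₂ : x₂ + y = 1 + β * k := by rw [hx₂, hy]; ring
  have hB := realBeta_gamma hx₂0 hy0
  have hB' := realBeta_gamma hx₁0 hy0
  rw [hsum₂] at hB
  rw [hsum₁] at hB'
  have hG1 : 0 < Real.Gamma (1 + β * k) := Real.Gamma_pos_of_pos (by positivity)
  have hG2 : 0 < Real.Gamma (1 + β) := Real.Gamma_pos_of_pos (by positivity)
  have hGy : 0 < Real.Gamma y := Real.Gamma_pos_of_pos hy0
  -- compare the beta integrals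
  have hint : (∫ t in (0:ℝ)..1, t ^ (x₂ - 1) * (1 - t) ^ (y - 1)) ≤
      ∫ t in (0:ℝ)..1, t ^ (x₁ - 1) * (1 - t) ^ (y - 1) := by
    apply intervalIntegral.integral_mono_ae_restrict (by norm_num)
      (betaIntegrand_integrable hx₂0 hy0) (betaIntegrand_integrable hx₁0 hy0)
    have h0 : ∀ᵐ t : ℝ ∂volume, t ≠ 0 := by
      rw [MeasureTheory.ae_iff]
      simpa using measure_singleton (0:ℝ)
    filter_upwards [ae_restrict_of_ae h0, ae_restrict_mem measurableSet_Icc] with t ht htm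
    have ht0 : 0 < t := lt_of_le_of_ne htm.1 (Ne.symm ht)
    have ht1 : t ≤ 1 := htm.2
    apply mul_le_mul_of_nonneg_right _ (Real.rpow_nonneg (by linarith) _)
    exact Real.rpow_le_rpow_of_exponent_ge ht0 ht1 (by linarith)
  -- convert ratios
  rw [div_le_div_iff₀ hG1 hG2]
  -- Γ x₂ * Γ (1+β) ≤ Γ x₁ * Γ (1+βk)
  have e₂ : Real.Gamma x₂ = Real.Gamma (1 + β * k) *
      (∫ t in (0:ℝ)..1, t ^ (x₂ - 1) * (1 - t) ^ (y - 1)) / Real.Gamma y := by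
    field_simp
    linarith [hB]
  have e₁ : Real.Gamma x₁ = Real.Gamma (1 + β) *
      (∫ t in (0:ℝ)..1, t ^ (x₁ - 1) * (1 - t) ^ (y - 1)) / Real.Gamma y := by
    field_simp
    linarith [hB']
  rw [e₁, e₂]
  rw [div_mul_eq_mul_div, div_mul_eq_mul_div, div_le_div_iff₀ hGy hGy]
  have hint0 : 0 ≤ ∫ t in (0:ℝ)..1, t ^ (x₁ - 1) * (1 - t) ^ (y - 1) := by
    apply intervalIntegral.integral_nonneg (by norm_num)
    intro t ht
    exact mul_nonneg (Real.rpow_nonneg ht.1 _) (Real.rpow_nonneg (by linarith [ht.2]) _)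
  nlinarith [mul_le_mul_of_nonneg_left hint (mul_pos hG1 hG2).le]
end

section
/- For every $\beta \in (0,1)$, $d \in \{1,2,3\}$ and every integer $k \geq 1$, $\frac{\Gamma(\beta(k-d/4))\,\Gamma(\beta(k-d/4)+1/2)}{\Gamma(1+\beta k)^2} \leq \frac{2^{1-2\beta(1-d/4)}\sqrt{\pi}\,\Gamma(2\beta(1-d/4))}{\Gamma(1+\beta)^2}$. -/
open Real Set

lemma gamma_ratio_anti {x y δ : ℝ} (hx : 0 < x) (hxy : x ≤ y) (hδ : 0 < δ) :
    Real.Gamma y / Real.Gamma (y + δ) ≤ Real.Gamma x / Real.Gamma (x + δ) := by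
  rcases eq_or_lt_of_le hxy with rfl | hlt
  · exact le_rfl
  have hy : 0 < y := hx.trans hlt
  set f := Real.log ∘ Real.Gamma with hf
  have hconv := Real.convexOn_log_Gamma
  have hxm : x ∈ Ioi (0:ℝ) := hx
  have hym : y ∈ Ioi (0:ℝ) := hy
  have hxdm : x + δ ∈ Ioi (0:ℝ) := by simp [mem_Ioi]; linarith
  have hydm : y + δ ∈ Ioi (0:ℝ) := by simp [mem_Ioi]; linarith
  have h1 := hconv.secant_mono hxm hxdm hydm (by linarith) (by linarith) (by linarith)
  have h2 := hconv.secant_mono hydm hxm hym (by linarith) (by linarith) hxy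
  -- h1 : (f (x+δ) - f x)/(x+δ-x) ≤ (f (y+δ) - f x)/(y+δ-x)
  -- h2 : (f x - f (y+δ))/(x-(y+δ)) ≤ (f y - f (y+δ))/(y-(y+δ))
  have key : f (x + δ) + f y ≤ f (y + δ) + f x := by
    have e1 : (f (x+δ) - f x)/δ ≤ (f (y+δ) - f x)/(y+δ-x) := by
      simpa [hf] using h1
    have e2 : (f (y+δ) - f x)/(y+δ-x) ≤ (f (y+δ) - f y)/δ := by
      have hA : (f x - f (y+δ))/(x-(y+δ)) = (f (y+δ) - f x)/(y+δ-x) := by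
        rw [← neg_div_neg_eq]; ring_nf
      have hB : (f y - f (y+δ))/(y-(y+δ)) = (f (y+δ) - f y)/δ := by
        rw [← neg_div_neg_eq]; ring_nf
      have h2' : (f x - f (y+δ))/(x-(y+δ)) ≤ (f y - f (y+δ))/(y-(y+δ)) := h2
      rwa [hA, hB] at h2'
    have := e1.trans e2
    rw [div_le_div_iff₀ hδ hδ] at this
    nlinarith
  have hpos : ∀ z : ℝ, 0 < z → 0 < Real.Gamma z := fun z hz => Real.Gamma_pos_of_pos hz
  have hc : Real.Gamma (x+δ) * Real.Gamma y ≤ Real.Gamma (y+δ) * Real.Gamma x := by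
    have hl : Real.log (Real.Gamma (x+δ) * Real.Gamma y) ≤ Real.log (Real.Gamma (y+δ) * Real.Gamma x) := by
      rw [Real.log_mul (hpos _ (by linarith)).ne' (hpos _ hy).ne',
        Real.log_mul (hpos _ (by linarith)).ne' (hpos _ hx).ne']
      exact key
    exact (Real.log_le_log_iff (by positivity) (by positivity)).mp hl
  rw [div_le_div_iff₀ (hpos _ (by linarith)) (hpos _ (by linarith))]
  nlinarith

theorem gamma_product_ratio_bound (β : ℝ) (hβ : β ∈ Set.Ioo (0:ℝ) 1) (d : ℕ)
    (hd : d ∈ ({1, 2, 3} : Set ℕ)) (k : ℕ) (hk : 1 ≤ k) :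
    Real.Gamma (β * ((k : ℝ) - d / 4)) * Real.Gamma (β * ((k : ℝ) - d / 4) + 1 / 2) /
        (Real.Gamma (1 + β * k)) ^ 2 ≤
      2 ^ (1 - 2 * β * (1 - (d : ℝ) / 4)) * Real.sqrt Real.pi *
        Real.Gamma (2 * β * (1 - (d : ℝ) / 4)) / (Real.Gamma (1 + β)) ^ 2 := by
  obtain ⟨hβ0, hβ1⟩ := hβ
  have hd3 : (d : ℝ) ≤ 3 := by
    rcases hd with rfl | rfl | rfl <;> norm_num
  have hd1 : (1 : ℝ) ≤ d := by
    rcases hd with rfl | rfl | rfl <;> norm_num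
  have hk1 : (1 : ℝ) ≤ (k : ℝ) := by exact_mod_cast hk
  set a1 := β * (1 - (d : ℝ) / 4) with ha1
  set a := β * ((k : ℝ) - (d : ℝ) / 4) with ha
  have ha1pos : 0 < a1 := by
    apply mul_pos hβ0; linarith
  have ha1a : a1 ≤ a := by
    apply mul_le_mul_of_nonneg_left _ hβ0.le; linarith
  have h1 : Real.Gamma a / Real.Gamma (1 + β * k) ≤ Real.Gamma a1 / Real.Gamma (1 + β) := by
    have := gamma_ratio_anti (x := a1) (y := a) (δ := 1 + β * (d : ℝ) / 4) ha1pos ha1a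
      (by positivity)
    have e1 : a1 + (1 + β * (d : ℝ) / 4) = 1 + β := by rw [ha1]; ring
    have e2 : a + (1 + β * (d : ℝ) / 4) = 1 + β * k := by rw [ha]; ring
    rw [e1, e2] at this; exact this
  have h2 : Real.Gamma (a + 1/2) / Real.Gamma (1 + β * k) ≤
      Real.Gamma (a1 + 1/2) / Real.Gamma (1 + β) := by
    have := gamma_ratio_anti (x := a1 + 1/2) (y := a + 1/2) (δ := 1/2 + β * (d : ℝ) / 4)
      (by positivity) (by linarith) (by positivity)
    have e1 : a1 + 1/2 + (1/2 + β * (d : ℝ) / 4) = 1 + β := by rw [ha1]; ring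
    have e2 : a + 1/2 + (1/2 + β * (d : ℝ) / 4) = 1 + β * k := by rw [ha]; ring
    rw [e1, e2] at this; exact this
  have hGpos : ∀ z : ℝ, 0 < z → 0 < Real.Gamma z := fun z hz => Real.Gamma_pos_of_pos hz
  have hapos : 0 < a := lt_of_lt_of_le ha1pos ha1a
  have hbk : (0:ℝ) < 1 + β * k := by positivity
  have hb1 : (0:ℝ) < 1 + β := by positivity
  have hdup : Real.Gamma a1 * Real.Gamma (a1 + 1/2) =
      Real.Gamma (2 * a1) * 2 ^ (1 - 2 * a1) * Real.sqrt Real.pi :=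
    Real.Gamma_mul_Gamma_add_half_of_pos ha1pos
  have key : Real.Gamma a / Real.Gamma (1 + β * k) * (Real.Gamma (a + 1/2) / Real.Gamma (1 + β * k)) ≤
      Real.Gamma a1 / Real.Gamma (1 + β) * (Real.Gamma (a1 + 1/2) / Real.Gamma (1 + β)) := by
    apply mul_le_mul h1 h2 ?_ ?_
    · exact div_nonneg (hGpos _ (by linarith)).le (hGpos _ hbk).le
    · exact div_nonneg (hGpos _ ha1pos).le (hGpos _ hb1).le
  calc Real.Gamma a * Real.Gamma (a + 1/2) / (Real.Gamma (1 + β * k)) ^ 2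
      = Real.Gamma a / Real.Gamma (1 + β * k) * (Real.Gamma (a + 1/2) / Real.Gamma (1 + β * k)) := by
        ring
    _ ≤ Real.Gamma a1 / Real.Gamma (1 + β) * (Real.Gamma (a1 + 1/2) / Real.Gamma (1 + β)) := key
    _ = Real.Gamma a1 * Real.Gamma (a1 + 1/2) / (Real.Gamma (1 + β)) ^ 2 := by ring
    _ = 2 ^ (1 - 2 * β * (1 - (d : ℝ) / 4)) * Real.sqrt Real.pi *
        Real.Gamma (2 * β * (1 - (d : ℝ) / 4)) / (Real.Gamma (1 + β)) ^ 2 := by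
        rw [hdup]
        have : 2 * a1 = 2 * β * (1 - (d : ℝ) / 4) := by rw [ha1]; ring
        rw [this]
        ring
end

section
/- Let $\beta \in (0,1)$, $d \in \{1,2,3\}$, and let $g_\beta$ be the density of the standard $\beta$-stable subordinator with $\int_0^\infty w^{-\beta k} g_\beta(w)\,dw = \Gamma(1+k)/\Gamma(1+\beta k)$ for all nonnegative integers $k$. Set $a_k^d(\beta) := \int_0^\infty w^{-\beta(k-d/4)} g_\beta(w)\,dw$. Then for every integer $k \geq 1$, $\frac{a_k^d(\beta)\sqrt{\Gamma(1+\beta(2k-d/2))}}{k!} \leq \frac{3\sqrt{2\beta(k-d/4)}\,\sqrt{\Gamma(2\beta(1-d/4))}}{\Gamma(1+\beta)}\, 2^{\beta(k-1)}$. -/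
open MeasureTheory

lemma my_gamma_ratio_mono {x y a : ℝ} (hx : 0 < x) (hxy : x ≤ y) (ha : 0 ≤ a) :
    Real.Gamma (x + a) * Real.Gamma y ≤ Real.Gamma (y + a) * Real.Gamma x := by
  have hy : 0 < y := lt_of_lt_of_le hx hxy
  rcases eq_or_lt_of_le (by linarith : x ≤ y + a) with h | h
  · have hyx : y = x := by nlinarith
    have ha0 : a = 0 := by nlinarith
    simp [hyx, ha0]
  · set D := y + a - x with hD
    have hD0 : 0 < D := by simp only [hD]; linarith
    have hθ : a / D ≤ 1 := by rw [div_le_one hD0]; linarith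
    have hμ : (y - x) / D ≤ 1 := by rw [div_le_one hD0]; linarith
    have hya : 0 < y + a := by linarith
    have c1 := Real.convexOn_log_Gamma.2 (Set.mem_Ioi.mpr hx) (Set.mem_Ioi.mpr hya)
      (by linarith : (0:ℝ) ≤ 1 - a / D) (show (0:ℝ) ≤ a / D from div_nonneg ha hD0.le) (by ring)
    have c2 := Real.convexOn_log_Gamma.2 (Set.mem_Ioi.mpr hx) (Set.mem_Ioi.mpr hya)
      (by linarith : (0:ℝ) ≤ 1 - (y - x) / D) (show (0:ℝ) ≤ (y - x) / D from div_nonneg (by linarith) hD0.le) (by ring)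
    have e1 : (1 - a / D) • x + (a / D) • (y + a) = x + a := by
      simp only [smul_eq_mul]; field_simp; ring
    have e2 : (1 - (y - x) / D) • x + ((y - x) / D) • (y + a) = y := by
      simp only [smul_eq_mul]; field_simp; ring
    rw [e1] at c1; rw [e2] at c2
    simp only [Function.comp_apply, smul_eq_mul] at c1 c2
    have hsum : Real.log (Real.Gamma (x + a)) + Real.log (Real.Gamma y)
        ≤ Real.log (Real.Gamma x) + Real.log (Real.Gamma (y + a)) := by
      have hcoef : a / D + (y - x) / D = 1 := by field_simp; ring
      have hq : (y - x) / D = 1 - a / D := by linarith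
      rw [hq] at c2
      nlinarith [c1, c2]
    have gpos : ∀ z : ℝ, 0 < z → 0 < Real.Gamma z := fun z hz => Real.Gamma_pos_of_pos hz
    calc Real.Gamma (x + a) * Real.Gamma y
        = Real.exp (Real.log (Real.Gamma (x + a)) + Real.log (Real.Gamma y)) := by
          rw [Real.exp_add, Real.exp_log (gpos _ (by linarith)), Real.exp_log (gpos _ hy)]
      _ ≤ Real.exp (Real.log (Real.Gamma x) + Real.log (Real.Gamma (y + a))) :=
          Real.exp_le_exp.mpr hsum
      _ = Real.Gamma (y + a) * Real.Gamma x := by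
          rw [Real.exp_add, Real.exp_log (gpos _ hx), Real.exp_log (gpos _ hya)]; ring

lemma my_gamma_step {y β : ℝ} (hy : 1 ≤ y) (hβ0 : 0 ≤ β) (hβ1 : β ≤ 1) :
    Real.Gamma (y + β) ≤ y * Real.Gamma y := by
  have hy0 : (0:ℝ) < y := by linarith
  have c := Real.convexOn_Gamma.2 (Set.mem_Ioi.mpr hy0) (Set.mem_Ioi.mpr (by linarith : (0:ℝ) < y + 1))
    (by linarith : (0:ℝ) ≤ 1 - β) hβ0 (by ring)
  have e : (1 - β) • y + β • (y + 1) = y + β := by simp only [smul_eq_mul]; ring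
  rw [e] at c
  simp only [smul_eq_mul] at c
  have h1 : Real.Gamma (y + 1) = y * Real.Gamma y := Real.Gamma_add_one (ne_of_gt hy0)
  have hg : 0 < Real.Gamma y := Real.Gamma_pos_of_pos hy0
  calc Real.Gamma (y + β) ≤ (1 - β) * Real.Gamma y + β * Real.Gamma (y + 1) := c
    _ = (1 - β + β * y) * Real.Gamma y := by rw [h1]; ring
    _ ≤ y * Real.Gamma y := by nlinarith [mul_nonneg (mul_nonneg (sub_nonneg.mpr hy) (sub_nonneg.mpr hβ1)) hg.le]

lemma my_key {β t c : ℝ} (hβ0 : 0 < β) (ht0 : 0 < t) (ht1 : t + 1/2 ≤ 1 + β) (ht2 : t ≤ 1 + β)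
    (hc : 0 ≤ c) :
    Real.Gamma (2 * (t + c)) * Real.Gamma (1 + β) ^ 2 ≤
      (2:ℝ) ^ (2 * c) * Real.Gamma (2 * t) * Real.Gamma (1 + β + c) ^ 2 := by
  have hpi : (0:ℝ) < Real.sqrt Real.pi := Real.sqrt_pos.mpr Real.pi_pos
  have dup1 := Real.Gamma_mul_Gamma_add_half t
  have dup2 := Real.Gamma_mul_Gamma_add_half (t + c)
  have r1 : Real.Gamma (t + c) * Real.Gamma (1 + β) ≤
      Real.Gamma (1 + β + c) * Real.Gamma t :=
    my_gamma_ratio_mono ht0 ht2 hc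
  have r2 : Real.Gamma (t + 1/2 + c) * Real.Gamma (1 + β) ≤
      Real.Gamma (1 + β + c) * Real.Gamma (t + 1/2) :=
    my_gamma_ratio_mono (by linarith) ht1 hc
  have gpos : ∀ z : ℝ, 0 < z → 0 < Real.Gamma z := fun z hz => Real.Gamma_pos_of_pos hz
  have p1 : 0 < Real.Gamma (t + c) := gpos _ (by linarith)
  have p2 : 0 < Real.Gamma (1 + β) := gpos _ (by linarith)
  have p3 : 0 < Real.Gamma (1 + β + c) := gpos _ (by linarith)
  have p4 : 0 < Real.Gamma t := gpos _ ht0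
  have p5 : 0 < Real.Gamma (t + 1/2) := gpos _ (by linarith)
  have p6 : 0 < Real.Gamma (t + 1/2 + c) := gpos _ (by linarith)
  have hmul : (Real.Gamma (t + c) * Real.Gamma (1 + β)) *
      (Real.Gamma (t + 1/2 + c) * Real.Gamma (1 + β)) ≤
      (Real.Gamma (1 + β + c) * Real.Gamma t) *
      (Real.Gamma (1 + β + c) * Real.Gamma (t + 1/2)) :=
    mul_le_mul r1 r2 (by positivity) (by positivity)
  have e2 : t + c + 1/2 = t + 1/2 + c := by ring
  rw [e2] at dup2
  have hC : (0:ℝ) < (2:ℝ) ^ (1 - 2 * (t + c)) * Real.sqrt Real.pi := by positivity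
  have h2c : (2:ℝ) ^ (1 - 2 * t) = (2:ℝ) ^ (1 - 2 * (t + c)) * (2:ℝ) ^ (2 * c) := by
    rw [← Real.rpow_add two_pos]; ring_nf
  refine le_of_mul_le_mul_right ?_ hC
  calc Real.Gamma (2 * (t + c)) * Real.Gamma (1 + β) ^ 2 *
        ((2:ℝ) ^ (1 - 2 * (t + c)) * Real.sqrt Real.pi)
      = (Real.Gamma (t + c) * Real.Gamma (t + 1/2 + c)) * Real.Gamma (1 + β) ^ 2 := by
        rw [dup2]; ring
    _ = (Real.Gamma (t + c) * Real.Gamma (1 + β)) *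
        (Real.Gamma (t + 1/2 + c) * Real.Gamma (1 + β)) := by ring
    _ ≤ (Real.Gamma (1 + β + c) * Real.Gamma t) *
        (Real.Gamma (1 + β + c) * Real.Gamma (t + 1/2)) := hmul
    _ = (Real.Gamma t * Real.Gamma (t + 1/2)) * Real.Gamma (1 + β + c) ^ 2 := by ring
    _ = Real.Gamma (2 * t) * (2:ℝ) ^ (1 - 2 * t) * Real.sqrt Real.pi *
        Real.Gamma (1 + β + c) ^ 2 := by rw [dup1]
    _ = (2:ℝ) ^ (2 * c) * Real.Gamma (2 * t) * Real.Gamma (1 + β + c) ^ 2 *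
        ((2:ℝ) ^ (1 - 2 * (t + c)) * Real.sqrt Real.pi) := by rw [h2c]; ring

open MeasureTheory

set_option maxHeartbeats 2000000 in
theorem a_k_d_sqrt_gamma_bound (β : ℝ) (hβ : β ∈ Set.Ioo (0:ℝ) 1) (d : ℕ)
    (hd : d ∈ ({1, 2, 3} : Set ℕ)) (g : ℝ → ℝ)
    (hg_nonneg : ∀ w, 0 ≤ g w)
    (hg_prob : ∫ w in Set.Ioi (0:ℝ), g w = 1)
    (hmom : ∀ m : ℕ, ∫ w in Set.Ioi (0:ℝ), w ^ (-(β * m)) * g w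
        = Real.Gamma (1 + m) / Real.Gamma (1 + β * m))
    (k : ℕ) (hk : 1 ≤ k) :
    (∫ w in Set.Ioi (0:ℝ), w ^ (-(β * ((k : ℝ) - d / 4))) * g w) *
        Real.sqrt (Real.Gamma (1 + β * (2 * k - (d : ℝ) / 2))) / (k.factorial : ℝ) ≤
      3 * Real.sqrt (2 * β * ((k : ℝ) - d / 4)) *
        Real.sqrt (Real.Gamma (2 * β * (1 - (d : ℝ) / 4))) / Real.Gamma (1 + β) *
        2 ^ (β * ((k : ℝ) - 1)) := by
  obtain ⟨hβ0, hβ1⟩ := hβ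
  have hd' : d = 1 ∨ d = 2 ∨ d = 3 := by simpa using hd
  have hd1 : (1:ℝ)/4 ≤ (d:ℝ)/4 := by rcases hd' with h|h|h <;> subst h <;> norm_num
  have hd2 : (d:ℝ)/4 ≤ 3/4 := by rcases hd' with h|h|h <;> subst h <;> norm_num
  have hk1 : (1:ℝ) ≤ (k:ℝ) := by exact_mod_cast hk
  have gpos : ∀ z : ℝ, 0 < z → 0 < Real.Gamma z := fun z hz => Real.Gamma_pos_of_pos hz
  -- integrability of the moment functions
  have hint : ∀ m : ℕ, Integrable (fun w : ℝ => w ^ (-(β * (m:ℝ))) * g w)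
      (volume.restrict (Set.Ioi 0)) := by
    intro m
    by_contra hni
    have h0 := hmom m
    rw [integral_undef hni] at h0
    have h1 : 0 < Real.Gamma (1 + (m:ℝ)) := gpos _ (by positivity)
    have h2 : 0 < Real.Gamma (1 + β * (m:ℝ)) := gpos _ (by positivity)
    exact absurd h0.symm (ne_of_gt (div_pos h1 h2))
  -- measurability of the target function
  have hfm : AEStronglyMeasurable (fun w : ℝ => w ^ (-(β * ((k:ℝ) - (d:ℝ)/4))) * g w)
      (volume.restrict (Set.Ioi 0)) := by
    have hm1 : AEStronglyMeasurable
        (fun w : ℝ => w ^ (β * ((d:ℝ)/4)) * (w ^ (-(β * (k:ℝ))) * g w))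
        (volume.restrict (Set.Ioi 0)) :=
      ((Real.continuous_rpow_const (by positivity : (0:ℝ) ≤ β * ((d:ℝ)/4))).measurable.aestronglyMeasurable).mul (hint k).1
    refine hm1.congr ?_
    rw [Filter.EventuallyEq, ae_restrict_iff' measurableSet_Ioi]
    filter_upwards with w
    intro hw
    have hw0 : (0:ℝ) < w := hw
    rw [← mul_assoc, ← Real.rpow_add hw0,
      show β * ((d:ℝ)/4) + -(β * (k:ℝ)) = -(β * ((k:ℝ) - (d:ℝ)/4)) from by ring]
  -- pointwise bound
  have hptwise : (fun w : ℝ => w ^ (-(β * ((k:ℝ) - (d:ℝ)/4))) * g w) ≤ᵐ[volume.restrict (Set.Ioi 0)]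
      fun w : ℝ => w ^ (-(β * ((k-1:ℕ):ℝ))) * g w + w ^ (-(β * (k:ℝ))) * g w := by
    rw [Filter.EventuallyLE, ae_restrict_iff' measurableSet_Ioi]
    filter_upwards with w
    intro hw
    have hw0 : (0:ℝ) < w := hw
    have hcast : ((k-1:ℕ):ℝ) = (k:ℝ) - 1 := by
      push_cast [Nat.cast_sub hk]; ring
    rw [hcast]
    have hg := hg_nonneg w
    rcases le_or_gt 1 w with h1 | h1
    · have hle : w ^ (-(β * ((k:ℝ) - (d:ℝ)/4))) ≤ w ^ (-(β * ((k:ℝ) - 1))) :=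
        Real.rpow_le_rpow_of_exponent_le h1 (by nlinarith)
      have hC : 0 ≤ w ^ (-(β * (k:ℝ))) := Real.rpow_nonneg hw0.le _
      nlinarith [mul_le_mul_of_nonneg_right hle hg, mul_nonneg hC hg]
    · have hle : w ^ (-(β * ((k:ℝ) - (d:ℝ)/4))) ≤ w ^ (-(β * (k:ℝ))) :=
        Real.rpow_le_rpow_of_exponent_ge hw0 h1.le (by nlinarith)
      have hC : 0 ≤ w ^ (-(β * ((k:ℝ) - 1))) := Real.rpow_nonneg hw0.le _
      nlinarith [mul_le_mul_of_nonneg_right hle hg, mul_nonneg hC hg]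
  -- integrability of target
  have hf_int : Integrable (fun w : ℝ => w ^ (-(β * ((k:ℝ) - (d:ℝ)/4))) * g w)
      (volume.restrict (Set.Ioi 0)) := by
    refine ((hint (k-1)).add (hint k)).mono' hfm ?_
    rw [ae_restrict_iff' measurableSet_Ioi]
    filter_upwards with w
    intro hw
    have hw0 : (0:ℝ) < w := hw
    have hnn : 0 ≤ w ^ (-(β * ((k:ℝ) - (d:ℝ)/4))) * g w :=
      mul_nonneg (Real.rpow_nonneg hw0.le _) (hg_nonneg w)
    rw [Real.norm_eq_abs, abs_of_nonneg hnn]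
    simp only [Pi.add_apply]
    have hcast : ((k-1:ℕ):ℝ) = (k:ℝ) - 1 := by push_cast [Nat.cast_sub hk]; ring
    rw [hcast]
    have hg := hg_nonneg w
    rcases le_or_gt 1 w with h1 | h1
    · have hle : w ^ (-(β * ((k:ℝ) - (d:ℝ)/4))) ≤ w ^ (-(β * ((k:ℝ) - 1))) :=
        Real.rpow_le_rpow_of_exponent_le h1 (by nlinarith)
      have hC : 0 ≤ w ^ (-(β * (k:ℝ))) := Real.rpow_nonneg hw0.le _
      nlinarith [mul_le_mul_of_nonneg_right hle hg, mul_nonneg hC hg]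
    · have hle : w ^ (-(β * ((k:ℝ) - (d:ℝ)/4))) ≤ w ^ (-(β * (k:ℝ))) :=
        Real.rpow_le_rpow_of_exponent_ge hw0 h1.le (by nlinarith)
      have hC : 0 ≤ w ^ (-(β * ((k:ℝ) - 1))) := Real.rpow_nonneg hw0.le _
      nlinarith [mul_le_mul_of_nonneg_right hle hg, mul_nonneg hC hg]
  -- integral bound
  have hmono := integral_mono_ae hf_int ((hint (k-1)).add (hint k)) hptwise
  simp only [Pi.add_apply] at hmono
  rw [integral_add (hint (k-1)) (hint k), hmom (k-1), hmom k] at hmono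
  -- bound the (k-1)-moment by the k-moment
  have hcast : ((k-1:ℕ):ℝ) = (k:ℝ) - 1 := by push_cast [Nat.cast_sub hk]; ring
  rw [hcast] at hmono
  have hykpos : (0:ℝ) < 1 + β * ((k:ℝ) - 1) := by nlinarith
  have hMle : Real.Gamma (1 + ((k:ℝ) - 1)) / Real.Gamma (1 + β * ((k:ℝ) - 1))
      ≤ Real.Gamma (1 + (k:ℝ)) / Real.Gamma (1 + β * (k:ℝ)) := by
    have hy1 : (1:ℝ) ≤ 1 + β * ((k:ℝ) - 1) := by nlinarith
    have step := my_gamma_step hy1 hβ0.le hβ1.le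
    have hyk : 1 + β * ((k:ℝ) - 1) ≤ (k:ℝ) := by nlinarith
    have hG1k : Real.Gamma (1 + ((k:ℝ) - 1)) = Real.Gamma (k:ℝ) := by norm_num
    have hGk1 : Real.Gamma (1 + (k:ℝ)) = (k:ℝ) * Real.Gamma (k:ℝ) := by
      rw [add_comm]; exact Real.Gamma_add_one (by positivity)
    have hGyb : (1 + β * ((k:ℝ) - 1)) + β = 1 + β * (k:ℝ) := by ring
    rw [hG1k, hGk1, div_le_div_iff₀ (gpos _ hykpos) (gpos _ (by nlinarith))]
    have hGkpos : 0 < Real.Gamma (k:ℝ) := gpos _ (by positivity)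
    have hGypos : 0 < Real.Gamma (1 + β * ((k:ℝ) - 1)) := gpos _ hykpos
    have hstep' : Real.Gamma (1 + β * (k:ℝ)) ≤ (k:ℝ) * Real.Gamma (1 + β * ((k:ℝ) - 1)) := by
      rw [← hGyb]
      calc Real.Gamma ((1 + β * ((k:ℝ) - 1)) + β) ≤ (1 + β * ((k:ℝ) - 1)) * Real.Gamma (1 + β * ((k:ℝ) - 1)) := step
        _ ≤ (k:ℝ) * Real.Gamma (1 + β * ((k:ℝ) - 1)) := by nlinarith
    nlinarith [mul_le_mul_of_nonneg_left hstep' hGkpos.le]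
  have habound : (∫ w in Set.Ioi (0:ℝ), w ^ (-(β * ((k : ℝ) - (d:ℝ) / 4))) * g w)
      ≤ 2 * (Real.Gamma (1 + (k:ℝ)) / Real.Gamma (1 + β * (k:ℝ))) := by linarith
  -- Gamma inequalities
  set t : ℝ := β * (1 - (d:ℝ)/4) with ht_def
  set c : ℝ := β * ((k:ℝ) - 1) with hc_def
  have ht0 : 0 < t := by rw [ht_def]; nlinarith
  have ht1 : t + 1/2 ≤ 1 + β := by rw [ht_def]; nlinarith
  have ht2 : t ≤ 1 + β := by rw [ht_def]; nlinarith
  have hc0 : 0 ≤ c := by rw [hc_def]; nlinarith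
  have hkey := my_key hβ0 ht0 ht1 ht2 hc0
  have hbc : 1 + β + c = 1 + β * (k:ℝ) := by rw [hc_def]; ring
  rw [hbc] at hkey
  set X : ℝ := 2 * β * ((k:ℝ) - (d:ℝ)/4) with hX_def
  have hX0 : 0 < X := by rw [hX_def]; nlinarith
  have hXe : 2 * (t + c) = X := by rw [hX_def, ht_def, hc_def]; ring
  rw [hXe] at hkey
  have hG1 : Real.Gamma (1 + β * (2 * (k:ℝ) - (d:ℝ)/2)) = X * Real.Gamma X := by
    rw [add_comm, show β * (2 * (k:ℝ) - (d:ℝ)/2) = X from by rw [hX_def]; ring]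
    exact Real.Gamma_add_one (ne_of_gt hX0)
  set Γq := Real.Gamma (1 + β) with hΓq
  set Γp := Real.Gamma (1 + β * (k:ℝ)) with hΓp
  have hq : 0 < Γq := gpos _ (by linarith)
  have hp : 0 < Γp := gpos _ (by nlinarith)
  have hΓ2t : 0 < Real.Gamma (2 * t) := gpos _ (by linarith)
  -- squared inequality with the X factor
  have hsq2 : (X * Real.Gamma X) * Γq ^ 2 ≤ X * ((2:ℝ) ^ (2 * c) * Real.Gamma (2 * t) * Γp ^ 2) := by
    nlinarith [mul_le_mul_of_nonneg_left hkey hX0.le]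
  -- take square roots
  have h2csq : (2:ℝ) ^ (2 * c) = ((2:ℝ) ^ c) ^ 2 := by
    rw [pow_two, ← Real.rpow_add two_pos]; ring_nf
  clear_value t c X Γq Γp
  have hsqrt : Real.sqrt (X * Real.Gamma X) * Γq ≤
      Real.sqrt X * (2:ℝ) ^ c * Real.sqrt (Real.Gamma (2 * t)) * Γp := by
    have h := Real.sqrt_le_sqrt hsq2
    have hGX : 0 ≤ Real.Gamma X := (gpos _ hX0).le
    have eL : Real.sqrt ((X * Real.Gamma X) * Γq ^ 2) = Real.sqrt (X * Real.Gamma X) * Γq := by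
      rw [Real.sqrt_mul (mul_nonneg hX0.le hGX) (Γq ^ 2), Real.sqrt_sq hq.le]
    have eR : Real.sqrt (X * ((2:ℝ) ^ (2 * c) * Real.Gamma (2 * t) * Γp ^ 2))
        = Real.sqrt X * (2:ℝ) ^ c * Real.sqrt (Real.Gamma (2 * t)) * Γp := by
      rw [Real.sqrt_mul hX0.le ((2:ℝ) ^ (2 * c) * Real.Gamma (2 * t) * Γp ^ 2),
        Real.sqrt_mul (by positivity : (0:ℝ) ≤ (2:ℝ) ^ (2 * c) * Real.Gamma (2 * t)) (Γp ^ 2),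
        Real.sqrt_sq hp.le,
        Real.sqrt_mul (by positivity : (0:ℝ) ≤ (2:ℝ) ^ (2 * c)) (Real.Gamma (2 * t)),
        h2csq, Real.sqrt_sq (by positivity : (0:ℝ) ≤ (2:ℝ) ^ c)]
      ring
    rw [eL, eR] at h
    exact h
  -- assemble
  have ha0 : 0 ≤ ∫ w in Set.Ioi (0:ℝ), w ^ (-(β * ((k : ℝ) - (d:ℝ) / 4))) * g w :=
    setIntegral_nonneg measurableSet_Ioi fun w hw =>
      mul_nonneg (Real.rpow_nonneg (le_of_lt hw) _) (hg_nonneg w)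
  have hfacpos : (0:ℝ) < (k.factorial : ℝ) := by exact_mod_cast k.factorial_pos
  have hGfac : Real.Gamma (1 + (k:ℝ)) = (k.factorial : ℝ) := by
    rw [add_comm]; exact_mod_cast Real.Gamma_nat_eq_factorial k
  rw [hGfac] at habound
  have hsq' : Real.sqrt (Real.Gamma (1 + β * (2 * (k:ℝ) - (d:ℝ)/2))) ≤
      Real.sqrt X * (2:ℝ) ^ c * Real.sqrt (Real.Gamma (2 * t)) * Γp / Γq := by
    rw [le_div_iff₀ hq, hG1]
    exact hsqrt
  rw [show (2:ℝ) * β * (1 - (d:ℝ)/4) = 2 * t from by rw [ht_def]; ring]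
  calc (∫ w in Set.Ioi (0:ℝ), w ^ (-(β * ((k : ℝ) - (d:ℝ) / 4))) * g w) *
        Real.sqrt (Real.Gamma (1 + β * (2 * (k:ℝ) - (d:ℝ)/2))) / (k.factorial : ℝ)
      ≤ (2 * ((k.factorial : ℝ) / Γp)) *
        (Real.sqrt X * (2:ℝ) ^ c * Real.sqrt (Real.Gamma (2 * t)) * Γp / Γq) / (k.factorial : ℝ) := by
        apply div_le_div_of_nonneg_right ?_ hfacpos.le
        exact mul_le_mul habound hsq' (Real.sqrt_nonneg _) (by positivity)
    _ = 2 * (Real.sqrt X * (2:ℝ) ^ c * Real.sqrt (Real.Gamma (2 * t))) / Γq := by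
        field_simp
    _ ≤ 3 * Real.sqrt X * Real.sqrt (Real.Gamma (2 * t)) / Γq * (2:ℝ) ^ c := by
        rw [show 3 * Real.sqrt X * Real.sqrt (Real.Gamma (2 * t)) / Γq * (2:ℝ) ^ c
            = 3 * (Real.sqrt X * (2:ℝ) ^ c * Real.sqrt (Real.Gamma (2 * t))) / Γq from by ring]
        apply div_le_div_of_nonneg_right ?_ hq.le
        nlinarith [Real.sqrt_nonneg X, Real.sqrt_nonneg (Real.Gamma (2 * t)),
          Real.rpow_nonneg (by norm_num : (0:ℝ) ≤ 2) c,
          mul_nonneg (mul_nonneg (Real.sqrt_nonneg X) (Real.rpow_nonneg (by norm_num : (0:ℝ) ≤ 2) c)) (Real.sqrt_nonneg (Real.Gamma (2 * t)))]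
end
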